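/- For every even integer n ≥ 8, there exists a nut graph G on n vertices with exactly one vertex orbit and exactly two edge orbits, i.e., o_v(G) = 1 and o_e(G) = 2. -/

import Mathlib

namespace NutPaper

open Matrix

variable {V : Type*}

open scoped Classical in
/-- The real adjacency matrix of a simple graph. -/
noncomputable def adjMat (G : SimpleGraph V) : Matrix V V ℝ :=
  Matrix.of fun u v => if G.Adj u v then (1 : ℝ) else 0

/-- A nut graph: the adjacency matrix has nullity exactly one, and every
nonzero kernel vector has all entries nonzero. -/
def IsNutGraph [Fintype V] (G : SimpleGraph V) : Prop :=
  Module.finrank ℝ (LinearMap.ker (Matrix.mulVecLin (adjMat G))) = 1 ∧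
  ∀ x : V → ℝ, adjMat G *ᵥ x = 0 → x ≠ 0 → ∀ v, x v ≠ 0

/-- The orbit of a vertex under the full automorphism group. -/
def vertexOrbit (G : SimpleGraph V) (v : V) : Set V :=
  {u | ∃ α : G ≃g G, α v = u}

/-- The set of vertex orbits. -/
def vertexOrbits (G : SimpleGraph V) : Set (Set V) :=
  Set.range (vertexOrbit G)

/-- The number of vertex orbits. -/
noncomputable def numVertexOrbits (G : SimpleGraph V) : ℕ :=
  Nat.card (vertexOrbits G)

/-- The orbit of an edge under the full automorphism group. -/
def edgeOrbit (G : SimpleGraph V) (e : Sym2 V) : Set (Sym2 V) :=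
  {f | ∃ α : G ≃g G, Sym2.map (⇑α) e = f}

/-- The set of edge orbits. -/
def edgeOrbits (G : SimpleGraph V) : Set (Set (Sym2 V)) :=
  edgeOrbit G '' G.edgeSet

/-- The number of edge orbits. -/
noncomputable def numEdgeOrbits (G : SimpleGraph V) : ℕ :=
  Nat.card (edgeOrbits G)


set_option linter.unusedSectionVars false
open ZMod
section Aux


def circ (N : ℕ) (a b : ℤ) : SimpleGraph (ZMod N) where
  Adj u v := u ≠ v ∧ (v - u = (a : ZMod N) ∨ v - u = -(a : ZMod N) ∨
      v - u = (b : ZMod N) ∨ v - u = -(b : ZMod N))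
  symm := ⟨by
    rintro u v ⟨h1, h2⟩
    refine ⟨h1.symm, ?_⟩
    have : u - v = -(v - u) := by ring
    rw [this]
    rcases h2 with h | h | h | h <;> rw [h] <;> simp⟩
  loopless := ⟨fun v h => h.1 rfl⟩

section main
variable {N : ℕ} [NeZero N] {a b : ℤ}
  (hab : ((a + b : ℤ) : ZMod N) ≠ 0) (hab' : ((a - b : ℤ) : ZMod N) ≠ 0)
  (h2a : ((2 * a : ℤ) : ZMod N) ≠ 0) (h2b : ((2 * b : ℤ) : ZMod N) ≠ 0)

include hab hab' h2a h2b

lemma adj_iff_mem (i j : ZMod N) :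
    (circ N a b).Adj i j ↔ j ∈ ({i + (a : ZMod N), i - (a : ZMod N), i + (b : ZMod N),
      i - (b : ZMod N)} : Finset (ZMod N)) := by
  have ha0 : (a : ZMod N) ≠ 0 := fun h => h2a (by push_cast; rw [h]; ring)
  have hb0 : (b : ZMod N) ≠ 0 := fun h => h2b (by push_cast; rw [h]; ring)
  simp only [Finset.mem_insert, Finset.mem_singleton, circ]
  constructor
  · rintro ⟨hne, h | h | h | h⟩
    · left; linear_combination h
    · right; left; linear_combination h
    · right; right; left; linear_combination h
    · right; right; right; linear_combination h
  · rintro (h | h | h | h) <;> subst h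
    · exact ⟨fun h => ha0 (by linear_combination -h), Or.inl (by ring)⟩
    · exact ⟨fun h => ha0 (by linear_combination h), Or.inr (Or.inl (by ring))⟩
    · exact ⟨fun h => hb0 (by linear_combination -h), Or.inr (Or.inr (Or.inl (by ring)))⟩
    · exact ⟨fun h => hb0 (by linear_combination h), Or.inr (Or.inr (Or.inr (by ring)))⟩

lemma four_distinct (i : ZMod N) :
    (i + (a : ZMod N) ≠ i - (a : ZMod N)) ∧ (i + (a : ZMod N) ≠ i + (b : ZMod N)) ∧
    (i + (a : ZMod N) ≠ i - (b : ZMod N)) ∧ (i - (a : ZMod N) ≠ i + (b : ZMod N)) ∧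
    (i - (a : ZMod N) ≠ i - (b : ZMod N)) ∧ (i + (b : ZMod N) ≠ i - (b : ZMod N)) := by
  refine ⟨fun h => h2a ?_, fun h => hab' ?_, fun h => hab ?_, fun h => hab ?_,
    fun h => hab' ?_, fun h => h2b ?_⟩ <;> push_cast
  · linear_combination h
  · linear_combination h
  · linear_combination h
  · linear_combination -h
  · linear_combination -h
  · linear_combination h

lemma mulVec_circ (y : ZMod N → ℝ) (i : ZMod N) :
    (adjMat (circ N a b) *ᵥ y) i =
      y (i + (a : ZMod N)) + y (i - (a : ZMod N)) + y (i + (b : ZMod N)) + y (i - (b : ZMod N)) := by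
  classical
  obtain ⟨d1, d2, d3, d4, d5, d6⟩ := four_distinct hab hab' h2a h2b i
  have : (adjMat (circ N a b) *ᵥ y) i = ∑ j, (if (circ N a b).Adj i j then y j else 0) := by
    simp only [Matrix.mulVec, adjMat, Matrix.of_apply, dotProduct]
    congr 1; ext j; split <;> simp
  rw [this]
  rw [Finset.sum_congr rfl (fun j _ => by
    rw [if_congr (adj_iff_mem hab hab' h2a h2b i j) rfl rfl])]
  rw [Finset.sum_ite_mem, Finset.univ_inter]
  rw [Finset.sum_insert (by simp [d1, d2, d3]), Finset.sum_insert (by simp [d4, d5]),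
    Finset.sum_insert (by simp [d6]), Finset.sum_singleton]
  ring
end main

noncomputable def xvec (N : ℕ) : ZMod N → ℝ := fun j => (-1 : ℝ) ^ j.val

section par
variable {N : ℕ} [NeZero N] (hN : 2 ∣ N)
include hN

lemma intCast_val_parity (c : ℤ) : ((c : ZMod N).val : ℤ) % 2 = c % 2 := by
  have h1 : (((c : ZMod N).val : ℤ)) = c % N := ZMod.val_intCast c
  rw [h1, Int.emod_emod_of_dvd c (by exact_mod_cast hN)]

lemma neg_one_pow_intCast_val {c : ℤ} (hc : Odd c) : (-1 : ℝ) ^ ((c : ZMod N).val) = -1 := by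
  have h2 : Odd ((c : ZMod N).val) := by
    rw [← Int.odd_coe_nat, Int.odd_iff, intCast_val_parity hN, ← Int.odd_iff]
    exact hc
  exact h2.neg_one_pow

lemma neg_one_pow_intCast_val_even {c : ℤ} (hc : Even c) : (-1 : ℝ) ^ ((c : ZMod N).val) = 1 := by
  have h2 : Even ((c : ZMod N).val) := by
    rw [← Int.even_coe_nat, Int.even_iff, intCast_val_parity hN, ← Int.even_iff]
    exact hc
  exact h2.neg_one_pow

lemma xvec_add (i : ZMod N) (c : ℤ) :
    xvec N (i + (c : ZMod N)) = (-1 : ℝ) ^ ((c : ZMod N).val) * xvec N i := by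
  unfold xvec
  rw [ZMod.val_add]
  have h3 : ∀ m : ℕ, (-1 : ℝ) ^ (m % N) = (-1) ^ m := by
    intro m
    have key : m % N % 2 = m % 2 := Nat.mod_mod_of_dvd m hN
    rcases Nat.even_or_odd m with h | h
    · rw [h.neg_one_pow]
      have : Even (m % N) := by rw [Nat.even_iff] at h ⊢; omega
      rw [this.neg_one_pow]
    · rw [h.neg_one_pow]
      have : Odd (m % N) := by rw [Nat.odd_iff] at h ⊢; omega
      rw [this.neg_one_pow]
  rw [h3, pow_add]; ring

lemma xvec_add_odd (i : ZMod N) {c : ℤ} (hc : Odd c) :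
    xvec N (i + (c : ZMod N)) = - xvec N i := by
  rw [xvec_add hN, neg_one_pow_intCast_val hN hc]; ring

lemma xvec_add_even (i : ZMod N) {c : ℤ} (hc : Even c) :
    xvec N (i + (c : ZMod N)) = xvec N i := by
  rw [xvec_add hN, neg_one_pow_intCast_val_even hN hc]; ring
end par

section spectral
variable {N q : ℕ} [NeZero N] (hNq : N = 2 * q) {a b : ℤ}
  (ha : Odd a) (hb : Even b)

-- `q` as an element of `ZMod N`
include hNq

lemma qbar_ne_zero : ((q : ℕ) : ZMod N) ≠ 0 := by
  rw [Ne, ZMod.natCast_eq_zero_iff]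
  intro h
  have hq0 : 0 < q := by
    rcases Nat.eq_zero_or_pos q with h' | h'
    · exfalso; exact (NeZero.ne N) (by omega)
    · exact h'
  have := Nat.le_of_dvd hq0 h
  omega

lemma stdAddChar_qbar : stdAddChar ((q : ℕ) : ZMod N) = (-1 : ℂ) := by
  have hsq : stdAddChar ((q : ℕ) : ZMod N) * stdAddChar ((q : ℕ) : ZMod N) = 1 := by
    rw [← AddChar.map_add_eq_mul]
    have : ((q : ℕ) : ZMod N) + ((q : ℕ) : ZMod N) = 0 := by
      have : ((q : ℕ) : ZMod N) + ((q : ℕ) : ZMod N) = ((2 * q : ℕ) : ZMod N) := by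
        push_cast; ring
      rw [this, ← hNq, ZMod.natCast_self]
    rw [this, AddChar.map_zero_eq_one]
  rcases mul_self_eq_one_iff.mp hsq with h | h
  · exfalso
    apply qbar_ne_zero hNq
    apply ZMod.injective_stdAddChar (N := N)
    rw [h, AddChar.map_zero_eq_one]
  · exact h

lemma stdAddChar_eq_neg_one_iff (m : ZMod N) :
    stdAddChar m = (-1 : ℂ) ↔ m = ((q : ℕ) : ZMod N) := by
  constructor
  · intro h
    apply ZMod.injective_stdAddChar (N := N)
    rw [h, stdAddChar_qbar hNq]
  · rintro rfl; exact stdAddChar_qbar hNq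

lemma odd_mul_qbar {s : ℤ} (hs : Odd s) :
    ((s : ℤ) : ZMod N) * ((q : ℕ) : ZMod N) = ((q : ℕ) : ZMod N) := by
  obtain ⟨t, rfl⟩ := hs
  have key : ((2 * t + 1) * q : ℤ) = (q : ℤ) + t * (N : ℤ) := by rw [hNq]; push_cast; ring
  calc ((2 * t + 1 : ℤ) : ZMod N) * ((q : ℕ) : ZMod N)
      = (((2 * t + 1) * q : ℤ) : ZMod N) := by push_cast; ring
    _ = ((q : ℕ) : ZMod N) := by
        rw [key]
        push_cast
        simp [ZMod.natCast_self]

omit hNq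

-- reindexing a twisted sum
lemma twisted_shift (Y : ZMod N → ℂ) (c k : ZMod N) :
    ∑ j : ZMod N, stdAddChar (-(j * k)) * Y (j + c) =
      stdAddChar (c * k) * ∑ j : ZMod N, stdAddChar (-(j * k)) * Y j := by
  rw [Finset.mul_sum]
  apply Fintype.sum_equiv (Equiv.addRight c)
  intro j
  simp only [Equiv.coe_addRight]
  rw [← mul_assoc, ← AddChar.map_add_eq_mul]
  congr 2
  ring

end spectral

section core
variable {N q : ℕ} [NeZero N] (hNq : N = 2 * q) {a b : ℤ}
  (ha : Odd a) (hb : Even b)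
  (hu : IsUnit ((a + b : ℤ) : ZMod N)) (hu' : IsUnit ((a - b : ℤ) : ZMod N))

include hNq ha hb hu hu'

lemma dft_vanish (Y : ZMod N → ℂ)
    (hY : ∀ i, Y (i + ((a : ℤ) : ZMod N)) + Y (i - ((a : ℤ) : ZMod N)) +
      Y (i + ((b : ℤ) : ZMod N)) + Y (i - ((b : ℤ) : ZMod N)) = 0)
    {k : ZMod N} (hk : k ≠ ((q : ℕ) : ZMod N)) : ZMod.dft Y k = 0 := by
  set A : ZMod N := ((a : ℤ) : ZMod N) with hA
  set B : ZMod N := ((b : ℤ) : ZMod N) with hB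
  set T : ℂ := ZMod.dft Y k with hT
  have hTsum : T = ∑ j : ZMod N, stdAddChar (-(j * k)) * Y j := by
    rw [hT, ZMod.dft_apply]; simp [smul_eq_mul]
  have h0 : (stdAddChar (A * k) + stdAddChar ((-A) * k) + stdAddChar (B * k)
      + stdAddChar ((-B) * k)) * T = 0 := by
    have hz : ∑ j : ZMod N, stdAddChar (-(j * k)) *
        (Y (j + A) + Y (j + (-A)) + Y (j + B) + Y (j + (-B))) = 0 := by
      apply Finset.sum_eq_zero
      intro j _
      have := hY j
      rw [sub_eq_add_neg, sub_eq_add_neg] at this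
      rw [this, mul_zero]
    simp only [mul_add, Finset.sum_add_distrib] at hz
    rw [twisted_shift Y A k, twisted_shift Y (-A) k, twisted_shift Y B k,
      twisted_shift Y (-B) k, ← hTsum] at hz
    linear_combination hz
  by_contra hTne
  have hS : stdAddChar (A * k) + stdAddChar ((-A) * k) + stdAddChar (B * k)
      + stdAddChar ((-B) * k) = 0 := by
    rcases mul_eq_zero.mp h0 with h | h
    · exact h
    · exact absurd h hTne
  have m1 : stdAddChar ((A + B) * k) * stdAddChar ((A - B) * k) =
      stdAddChar (A * k) * stdAddChar (A * k) := by
    rw [← AddChar.map_add_eq_mul, ← AddChar.map_add_eq_mul]; congr 1; ring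
  have e1 : stdAddChar (B * k) * stdAddChar (A * k) = stdAddChar ((A + B) * k) := by
    rw [← AddChar.map_add_eq_mul]; congr 1; ring
  have e2 : stdAddChar ((-B) * k) * stdAddChar (A * k) = stdAddChar ((A - B) * k) := by
    rw [← AddChar.map_add_eq_mul]; congr 1; ring
  have e3 : stdAddChar ((-A) * k) * stdAddChar (A * k) = 1 := by
    rw [← AddChar.map_add_eq_mul]
    have : (-A) * k + A * k = 0 := by ring
    rw [this, AddChar.map_zero_eq_one]
  have key : (stdAddChar ((A + B) * k) + 1) * (stdAddChar ((A - B) * k) + 1) = 0 := by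
    have expand : (stdAddChar ((A + B) * k) + 1) * (stdAddChar ((A - B) * k) + 1) =
        (stdAddChar (A * k) + stdAddChar ((-A) * k) + stdAddChar (B * k)
          + stdAddChar ((-B) * k)) * stdAddChar (A * k) := by
      linear_combination m1 - e1 - e2 - e3
    rw [expand, hS, zero_mul]
  rcases mul_eq_zero.mp key with h | h
  · have hX : stdAddChar ((A + B) * k) = -1 := eq_neg_of_add_eq_zero_left h
    rw [stdAddChar_eq_neg_one_iff hNq] at hX
    have hAB : A + B = ((a + b : ℤ) : ZMod N) := by rw [hA, hB]; push_cast; ring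
    have hodd : Odd (a + b) := ha.add_even hb
    have hq' : ((a + b : ℤ) : ZMod N) * ((q : ℕ) : ZMod N) = ((q : ℕ) : ZMod N) :=
      odd_mul_qbar hNq hodd
    apply hk
    apply hu.mul_left_cancel
    rw [← hAB] at hq' ⊢
    rw [hX, hq']
  · have hX : stdAddChar ((A - B) * k) = -1 := eq_neg_of_add_eq_zero_left h
    rw [stdAddChar_eq_neg_one_iff hNq] at hX
    have hAB : A - B = ((a - b : ℤ) : ZMod N) := by rw [hA, hB]; push_cast; ring
    have hodd : Odd (a - b) := ha.sub_even hb
    have hq' : ((a - b : ℤ) : ZMod N) * ((q : ℕ) : ZMod N) = ((q : ℕ) : ZMod N) :=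
      odd_mul_qbar hNq hodd
    apply hk
    apply hu'.mul_left_cancel
    rw [← hAB] at hq' ⊢
    rw [hX, hq']

lemma kernel_struct (y : ZMod N → ℝ)
    (hy : ∀ i, y (i + ((a : ℤ) : ZMod N)) + y (i - ((a : ℤ) : ZMod N)) +
      y (i + ((b : ℤ) : ZMod N)) + y (i - ((b : ℤ) : ZMod N)) = 0) :
    ∀ j, y j = y 0 * (-1 : ℝ) ^ (j.val) := by
  set Y : ZMod N → ℂ := fun j => (y j : ℂ) with hYdef
  have hY : ∀ i, Y (i + ((a : ℤ) : ZMod N)) + Y (i - ((a : ℤ) : ZMod N)) +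
      Y (i + ((b : ℤ) : ZMod N)) + Y (i - ((b : ℤ) : ZMod N)) = 0 := by
    intro i
    show (y _ : ℂ) + (y _ : ℂ) + (y _ : ℂ) + (y _ : ℂ) = 0
    exact_mod_cast hy i
  have hvan : ∀ k, k ≠ ((q : ℕ) : ZMod N) → ZMod.dft Y k = 0 :=
    fun k hk => dft_vanish hNq ha hb hu hu' Y hY hk
  have hsign : ∀ k : ZMod N, stdAddChar (((q : ℕ) : ZMod N) * k) = (-1 : ℂ) ^ (k.val) := by
    intro k
    conv_lhs => rw [← ZMod.natCast_zmod_val k, mul_comm, ← nsmul_eq_mul]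
    rw [AddChar.map_nsmul_eq_pow, stdAddChar_qbar hNq]
  have hinv : ∀ k, Y k = (N : ℂ)⁻¹ * (-1 : ℂ) ^ (k.val) * ZMod.dft Y ((q : ℕ) : ZMod N) := by
    intro k
    have h1 : Y k = ZMod.dft.symm (ZMod.dft Y) k := by rw [LinearEquiv.symm_apply_apply]
    rw [h1, ZMod.invDFT_apply]
    rw [Finset.sum_eq_single (((q : ℕ) : ZMod N))]
    · rw [smul_eq_mul, smul_eq_mul, hsign k]
      ring
    · intro j _ hj
      rw [hvan j hj, smul_zero]
    · intro h; exact absurd (Finset.mem_univ _) h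
  have h0 : Y 0 = (N : ℂ)⁻¹ * ZMod.dft Y ((q : ℕ) : ZMod N) := by
    rw [hinv 0, ZMod.val_zero, pow_zero, mul_one]
  intro j
  have : Y j = Y 0 * (-1 : ℂ) ^ (j.val) := by rw [hinv j, h0]; ring
  have this' : (y j : ℂ) = (y 0 : ℂ) * (-1 : ℂ) ^ (j.val) := this
  exact_mod_cast this'

end core

section nut
variable {N q : ℕ} [NeZero N] (hNq : N = 2 * q) {a b : ℤ}
  (ha : Odd a) (hb : Even b)
  (hu : IsUnit ((a + b : ℤ) : ZMod N)) (hu' : IsUnit ((a - b : ℤ) : ZMod N))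
  (h2a : ((2 * a : ℤ) : ZMod N) ≠ 0) (h2b : ((2 * b : ℤ) : ZMod N) ≠ 0)
  (h8 : 8 ≤ N)

include hNq ha hb hu hu' h2a h2b h8

lemma hab_ne : ((a + b : ℤ) : ZMod N) ≠ 0 := by
  haveI : Fact (1 < N) := ⟨by omega⟩
  exact hu.ne_zero

lemma hab'_ne : ((a - b : ℤ) : ZMod N) ≠ 0 := by
  haveI : Fact (1 < N) := ⟨by omega⟩
  exact hu'.ne_zero

omit ha hb hu hu' h2a h2b h8 in
lemma hdvd : 2 ∣ N := ⟨q, hNq⟩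

omit hNq ha hb hu hu' h2a h2b h8 in
lemma sub_as_add (i : ZMod N) (c : ℤ) : i - ((c : ℤ) : ZMod N) = i + (((-c) : ℤ) : ZMod N) := by
  push_cast; ring

lemma xvec_in_ker : adjMat (circ N a b) *ᵥ xvec N = 0 := by
  funext i
  rw [Pi.zero_apply,
    mulVec_circ (hab_ne hNq ha hb hu hu' h2a h2b h8) (hab'_ne hNq ha hb hu hu' h2a h2b h8) h2a h2b,
    sub_as_add, sub_as_add,
    xvec_add_odd (hdvd hNq) i ha,
    xvec_add_odd (hdvd hNq) i ha.neg,
    xvec_add_even (hdvd hNq) i hb,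
    xvec_add_even (hdvd hNq) i hb.neg]
  ring

lemma mem_ker_struct (y : ZMod N → ℝ) (hy : adjMat (circ N a b) *ᵥ y = 0) :
    ∀ j, y j = y 0 * xvec N j := by
  have hrec : ∀ i, y (i + ((a : ℤ) : ZMod N)) + y (i - ((a : ℤ) : ZMod N)) +
      y (i + ((b : ℤ) : ZMod N)) + y (i - ((b : ℤ) : ZMod N)) = 0 := by
    intro i
    have := congrFun hy i
    rwa [mulVec_circ (hab_ne hNq ha hb hu hu' h2a h2b h8) (hab'_ne hNq ha hb hu hu' h2a h2b h8)
      h2a h2b, Pi.zero_apply] at this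
  exact kernel_struct hNq ha hb hu hu' y hrec

omit hNq ha hb hu hu' h2a h2b h8 in
lemma xvec_ne_zero' : xvec N ≠ 0 := by
  intro h
  have := congrFun h 0
  rw [Pi.zero_apply] at this
  unfold xvec at this
  rw [ZMod.val_zero, pow_zero] at this
  norm_num at this

lemma ker_eq_span :
    LinearMap.ker (Matrix.mulVecLin (adjMat (circ N a b))) = Submodule.span ℝ {xvec N} := by
  apply le_antisymm
  · intro y hy
    rw [LinearMap.mem_ker, Matrix.mulVecLin_apply] at hy
    have := mem_ker_struct hNq ha hb hu hu' h2a h2b h8 y hy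
    rw [Submodule.mem_span_singleton]
    exact ⟨y 0, by funext j; rw [Pi.smul_apply, smul_eq_mul, this j]⟩
  · rw [Submodule.span_le, Set.singleton_subset_iff]
    rw [SetLike.mem_coe, LinearMap.mem_ker, Matrix.mulVecLin_apply]
    exact xvec_in_ker hNq ha hb hu hu' h2a h2b h8

lemma finrank_ker_one :
    Module.finrank ℝ (LinearMap.ker (Matrix.mulVecLin (adjMat (circ N a b)))) = 1 := by
  rw [ker_eq_span hNq ha hb hu hu' h2a h2b h8]
  exact finrank_span_singleton (xvec_ne_zero')

lemma full_support (y : ZMod N → ℝ) (hy : adjMat (circ N a b) *ᵥ y = 0) (hy0 : y ≠ 0) :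
    ∀ v, y v ≠ 0 := by
  have hs := mem_ker_struct hNq ha hb hu hu' h2a h2b h8 y hy
  have hy00 : y 0 ≠ 0 := by
    intro h
    apply hy0
    funext j
    rw [hs j, h, zero_mul, Pi.zero_apply]
  intro v
  rw [hs v]
  apply mul_ne_zero hy00
  unfold xvec
  exact pow_ne_zero _ (by norm_num)

end nut


-- ===== generic orbit lemmas =====
lemma edgeOrbit_eq_of_mem {V : Type*} {G : SimpleGraph V} {e f : Sym2 V}
    (h : ∃ α : G ≃g G, Sym2.map (⇑α) e = f) : edgeOrbit G e = edgeOrbit G f := by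
  obtain ⟨α, hα⟩ := h
  have hback : Sym2.map (⇑α.symm) f = e := by
    rw [← hα, Sym2.map_map]
    have : (⇑α.symm ∘ ⇑α) = id := by funext w; simp
    rw [this, Sym2.map_id]; rfl
  ext g
  constructor
  · rintro ⟨β, rfl⟩
    exact ⟨α.symm.trans β, by rw [← hback, Sym2.map_map]; rfl⟩
  · rintro ⟨β, rfl⟩
    exact ⟨α.trans β, by rw [← hα, Sym2.map_map]; rfl⟩

-- ===== translations =====
section aut
variable {N : ℕ} {a b : ℤ}

def transAut (c : ZMod N) : circ N a b ≃g circ N a b where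
  toEquiv := Equiv.addRight c
  map_rel_iff' := by
    intro u v
    simp only [Equiv.coe_addRight, circ]
    constructor
    · rintro ⟨h1, h2⟩
      refine ⟨fun h => h1 (by rw [h]), ?_⟩
      have he : v - u = v + c - (u + c) := by ring
      rw [he]; exact h2
    · rintro ⟨h1, h2⟩
      refine ⟨fun h => h1 (by exact add_right_cancel h), ?_⟩
      have he : v + c - (u + c) = v - u := by ring
      rw [he]; exact h2

@[simp] lemma transAut_apply (c v : ZMod N) : transAut (a := a) (b := b) c v = v + c := rfl

lemma vertexOrbit_circ (v : ZMod N) : vertexOrbit (circ N a b) v = Set.univ := by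
  ext u
  simp only [Set.mem_univ, iff_true, vertexOrbit, Set.mem_setOf_eq]
  exact ⟨transAut (u - v), by simp⟩

lemma numVertexOrbits_circ [NeZero N] : numVertexOrbits (circ N a b) = 1 := by
  have h : vertexOrbits (circ N a b) = {Set.univ} := by
    unfold vertexOrbits
    have : vertexOrbit (circ N a b) = fun _ => Set.univ := funext vertexOrbit_circ
    rw [this, Set.range_const]
  rw [numVertexOrbits, h, Nat.card_coe_set_eq, Set.ncard_singleton]

end aut

-- ===== edge orbits =====
section edges
variable {N q : ℕ} [NeZero N] {a b : ℤ}

lemma a_ne_zero (h2a : ((2 * a : ℤ) : ZMod N) ≠ 0) : ((a : ℤ) : ZMod N) ≠ 0 :=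
  fun h => h2a (by push_cast; rw [h]; ring)

lemma b_ne_zero (h2b : ((2 * b : ℤ) : ZMod N) ≠ 0) : ((b : ℤ) : ZMod N) ≠ 0 :=
  fun h => h2b (by push_cast; rw [h]; ring)

lemma edge_class (e : Sym2 (ZMod N)) (he : e ∈ (circ N a b).edgeSet) :
    edgeOrbit (circ N a b) e = edgeOrbit (circ N a b) s(0, ((a : ℤ) : ZMod N)) ∨
    edgeOrbit (circ N a b) e = edgeOrbit (circ N a b) s(0, ((b : ℤ) : ZMod N)) := by
  induction e with
  | _ u v =>
    rw [SimpleGraph.mem_edgeSet] at he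
    obtain ⟨hne, hd⟩ := he
    rcases hd with h | h | h | h
    · left
      apply edgeOrbit_eq_of_mem
      refine ⟨transAut (-u), ?_⟩
      rw [Sym2.map_pair_eq, transAut_apply, transAut_apply]
      have e1 : u + -u = 0 := add_neg_cancel u
      have e2 : v + -u = ((a : ℤ) : ZMod N) := by rw [← h]; ring
      rw [e1, e2]
    · left
      apply edgeOrbit_eq_of_mem
      refine ⟨transAut (-v), ?_⟩
      rw [Sym2.map_pair_eq, transAut_apply, transAut_apply, Sym2.eq_swap]
      have e1 : v + -v = 0 := add_neg_cancel v
      have e2 : u + -v = ((a : ℤ) : ZMod N) := by linear_combination -h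
      rw [e1, e2]
    · right
      apply edgeOrbit_eq_of_mem
      refine ⟨transAut (-u), ?_⟩
      rw [Sym2.map_pair_eq, transAut_apply, transAut_apply]
      have e1 : u + -u = 0 := add_neg_cancel u
      have e2 : v + -u = ((b : ℤ) : ZMod N) := by rw [← h]; ring
      rw [e1, e2]
    · right
      apply edgeOrbit_eq_of_mem
      refine ⟨transAut (-v), ?_⟩
      rw [Sym2.map_pair_eq, transAut_apply, transAut_apply, Sym2.eq_swap]
      have e1 : v + -v = 0 := add_neg_cancel v
      have e2 : u + -v = ((b : ℤ) : ZMod N) := by linear_combination -h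
      rw [e1, e2]

lemma edgeOrbits_circ (h2a : ((2 * a : ℤ) : ZMod N) ≠ 0) (h2b : ((2 * b : ℤ) : ZMod N) ≠ 0) :
    edgeOrbits (circ N a b) = {edgeOrbit (circ N a b) s(0, ((a : ℤ) : ZMod N)),
      edgeOrbit (circ N a b) s(0, ((b : ℤ) : ZMod N))} := by
  ext O
  constructor
  · rintro ⟨e, he, rfl⟩
    rcases edge_class e he with h | h
    · rw [h]; exact Set.mem_insert _ _
    · rw [h]; exact Set.mem_insert_of_mem _ rfl
  · rintro (rfl | rfl)
    · exact ⟨s(0, ((a : ℤ) : ZMod N)), by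
        rw [SimpleGraph.mem_edgeSet]
        exact ⟨fun h => a_ne_zero h2a h.symm, Or.inl (by rw [sub_zero])⟩, rfl⟩
    · exact ⟨s(0, ((b : ℤ) : ZMod N)), by
        rw [SimpleGraph.mem_edgeSet]
        exact ⟨fun h => b_ne_zero h2b h.symm, Or.inr (Or.inr (Or.inl (by rw [sub_zero])))⟩, rfl⟩

lemma edgeOrbit_ne (hNq : N = 2 * q) (ha : Odd a) (hb : Even b)
    (hu : IsUnit ((a + b : ℤ) : ZMod N)) (hu' : IsUnit ((a - b : ℤ) : ZMod N))
    (h2a : ((2 * a : ℤ) : ZMod N) ≠ 0) (h2b : ((2 * b : ℤ) : ZMod N) ≠ 0) (h8 : 8 ≤ N) :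
    edgeOrbit (circ N a b) s(0, ((a : ℤ) : ZMod N)) ≠
      edgeOrbit (circ N a b) s(0, ((b : ℤ) : ZMod N)) := by
  intro heq
  have hmem : s(0, ((b : ℤ) : ZMod N)) ∈ edgeOrbit (circ N a b) s(0, ((b : ℤ) : ZMod N)) := by
    refine ⟨RelIso.refl _, ?_⟩
    have : ⇑(RelIso.refl (circ N a b).Adj) = id := rfl
    rw [this, Sym2.map_id]; rfl
  rw [← heq] at hmem
  obtain ⟨α, hα⟩ := hmem
  set y : ZMod N → ℝ := fun j => xvec N (α j) with hydef
  have hA : ∀ u v : ZMod N, adjMat (circ N a b) u v = adjMat (circ N a b) (α u) (α v) := by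
    intro u v
    unfold adjMat
    simp only [Matrix.of_apply]
    by_cases h : (circ N a b).Adj u v
    · rw [if_pos h, if_pos (α.map_adj_iff.mpr h)]
    · rw [if_neg h, if_neg (fun hc => h (α.map_adj_iff.mp hc))]
  have hkerY : adjMat (circ N a b) *ᵥ y = 0 := by
    funext i
    have step : (adjMat (circ N a b) *ᵥ y) i = (adjMat (circ N a b) *ᵥ xvec N) (α i) := by
      simp only [Matrix.mulVec, dotProduct, hydef]
      rw [(Equiv.sum_comp α.toEquiv (fun j => adjMat (circ N a b) (α i) j * xvec N j)).symm]
      apply Finset.sum_congr rfl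
      intro j _
      show adjMat (circ N a b) i j * xvec N (α j) =
        adjMat (circ N a b) (α i) (α j) * xvec N (α j)
      rw [hA i j]
    rw [step, xvec_in_ker hNq ha hb hu hu' h2a h2b h8]
    rfl
  have hy := mem_ker_struct hNq ha hb hu hu' h2a h2b h8 y hkerY
  have hxa : xvec N ((a : ℤ) : ZMod N) = -1 := neg_one_pow_intCast_val (hdvd hNq) ha
  have hxb : xvec N ((b : ℤ) : ZMod N) = 1 := neg_one_pow_intCast_val_even (hdvd hNq) hb
  have hx0 : xvec N (0 : ZMod N) = 1 := by unfold xvec; rw [ZMod.val_zero, pow_zero]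
  have hsq : y 0 * y 0 = 1 := by
    rw [hydef]
    show xvec N (α 0) * xvec N (α 0) = 1
    unfold xvec
    rw [← mul_pow]
    norm_num
  have hprod : y 0 * y ((a : ℤ) : ZMod N) = -1 := by
    rw [hy ((a : ℤ) : ZMod N), hxa]
    calc y 0 * (y 0 * -1) = -(y 0 * y 0) := by ring
    _ = -1 := by rw [hsq]
  rw [Sym2.map_pair_eq] at hα
  rw [Sym2.eq_iff] at hα
  have hcontra : y 0 * y ((a : ℤ) : ZMod N) = 1 := by
    show xvec N (α 0) * xvec N (α ((a : ℤ) : ZMod N)) = 1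
    rcases hα with ⟨h1, h2⟩ | ⟨h1, h2⟩
    · rw [h1, h2, hx0, hxb]; ring
    · rw [h1, h2, hx0, hxb]; ring
  rw [hcontra] at hprod
  norm_num at hprod

lemma numEdgeOrbits_circ (hNq : N = 2 * q) (ha : Odd a) (hb : Even b)
    (hu : IsUnit ((a + b : ℤ) : ZMod N)) (hu' : IsUnit ((a - b : ℤ) : ZMod N))
    (h2a : ((2 * a : ℤ) : ZMod N) ≠ 0) (h2b : ((2 * b : ℤ) : ZMod N) ≠ 0) (h8 : 8 ≤ N) :
    numEdgeOrbits (circ N a b) = 2 := by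
  rw [numEdgeOrbits, edgeOrbits_circ h2a h2b, Nat.card_coe_set_eq,
    Set.ncard_pair (edgeOrbit_ne hNq ha hb hu hu' h2a h2b h8)]
end edges


-- ===== arithmetic helpers =====
lemma unit_of_cert {N : ℕ} {z : ℤ} (s c : ℤ) (h : z * s = 1 + c * N) :
    IsUnit ((z : ℤ) : ZMod N) := by
  apply IsUnit.of_mul_eq_one ((s : ℤ) : ZMod N)
  have h2 : ((z * s : ℤ) : ZMod N) = ((1 + c * N : ℤ) : ZMod N) := by rw [h]
  push_cast at h2
  rw [ZMod.natCast_self] at h2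
  rw [h2]; ring

lemma intCast_ne_zero_of_bound {N : ℕ} {z : ℤ} (h1 : z ≠ 0) (h2 : |z| < (N : ℤ)) :
    ((z : ℤ) : ZMod N) ≠ 0 := by
  rw [Ne, ZMod.intCast_zmod_eq_zero_iff_dvd]
  intro hd
  have h3 : (N : ℤ) ≤ |z| := Int.le_of_dvd (abs_pos.mpr h1) ((dvd_abs _ _).mpr hd)
  omega

-- ===== builder =====
lemma build {N q : ℕ} [NeZero N] (hNq : N = 2 * q) (h8 : 8 ≤ N) (b : ℤ) (hb : Even b)
    (hu' : IsUnit ((1 - 2 * b : ℤ) : ZMod N))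
    (h2a : ((2 - 2 * b : ℤ) : ZMod N) ≠ 0) (h2b : ((2 * b : ℤ) : ZMod N) ≠ 0) :
    ∃ G : SimpleGraph (ZMod N), IsNutGraph G ∧ numVertexOrbits G = 1 ∧ numEdgeOrbits G = 2 := by
  set a : ℤ := 1 - b with hadef
  have ha : Odd a := by
    rw [hadef]
    exact (odd_one).sub_even hb
  have hu : IsUnit ((a + b : ℤ) : ZMod N) := by
    have : (a + b : ℤ) = 1 := by rw [hadef]; ring
    rw [this, Int.cast_one]
    exact isUnit_one
  have hu'' : IsUnit ((a - b : ℤ) : ZMod N) := by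
    have : (a - b : ℤ) = 1 - 2 * b := by rw [hadef]; ring
    rw [this]; exact hu'
  have h2a' : ((2 * a : ℤ) : ZMod N) ≠ 0 := by
    have : (2 * a : ℤ) = 2 - 2 * b := by rw [hadef]; ring
    rw [this]; exact h2a
  refine ⟨circ N a b, ⟨?_, ?_⟩, numVertexOrbits_circ, ?_⟩
  · exact finrank_ker_one hNq ha hb hu hu'' h2a' h2b h8
  · intro y hy hy0 v
    exact full_support hNq ha hb hu hu'' h2a' h2b h8 y hy hy0 v
  · exact numEdgeOrbits_circ hNq ha hb hu hu'' h2a' h2b h8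

-- ===== main theorem on ZMod =====
theorem zmod_main (N q : ℕ) [NeZero N] (hNq : N = 2 * q) (h8 : 8 ≤ N) :
    ∃ G : SimpleGraph (ZMod N), IsNutGraph G ∧ numVertexOrbits G = 1 ∧ numEdgeOrbits G = 2 := by
  have h4 : 4 ≤ q := by omega
  have hmod : q % 4 = 0 ∨ q % 4 = 1 ∨ q % 4 = 2 ∨ q % 4 = 3 := by omega
  rcases hmod with h | h | h | h
  · -- q = 4t, t ≥ 1
    obtain ⟨t, ht⟩ : ∃ t : ℕ, q = 4 * t := ⟨q / 4, by omega⟩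
    have ht1 : 1 ≤ t := by omega
    have hNZ : (N : ℤ) = 8 * (t : ℤ) := by rw [hNq, ht]; push_cast; ring
    have htZ : 1 ≤ (t : ℤ) := by exact_mod_cast ht1
    refine build hNq h8 (2 * t) ⟨t, by ring⟩ ?_ ?_ ?_
    · exact unit_of_cert (1 - 4 * t) (2 * t - 1)
        (by rw [hNZ]; ring)
    · exact intCast_ne_zero_of_bound (by omega) (by rw [hNZ]; rw [abs_sub_comm]; rw [abs_of_nonneg (by omega)]; omega)
    · exact intCast_ne_zero_of_bound (by omega) (by rw [hNZ, abs_of_nonneg (by omega)]; omega)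
  · -- q = 4t+1, t ≥ 1
    obtain ⟨t, ht⟩ : ∃ t : ℕ, q = 4 * t + 1 := ⟨q / 4, by omega⟩
    have ht1 : 1 ≤ t := by omega
    have hNZ : (N : ℤ) = 8 * (t : ℤ) + 2 := by rw [hNq, ht]; push_cast; ring
    have htZ : 1 ≤ (t : ℤ) := by exact_mod_cast ht1
    refine build hNq h8 (2 * t) ⟨t, by ring⟩ ?_ ?_ ?_
    · exact unit_of_cert (2 * t + 1) (-t) (by rw [hNZ]; ring)
    · exact intCast_ne_zero_of_bound (by omega) (by rw [hNZ, abs_sub_comm, abs_of_nonneg (by omega)]; omega)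
    · exact intCast_ne_zero_of_bound (by omega) (by rw [hNZ, abs_of_nonneg (by omega)]; omega)
  · -- q = 4t+2, t ≥ 1
    obtain ⟨t, ht⟩ : ∃ t : ℕ, q = 4 * t + 2 := ⟨q / 4, by omega⟩
    have ht1 : 1 ≤ t := by omega
    have hNZ : (N : ℤ) = 8 * (t : ℤ) + 4 := by rw [hNq, ht]; push_cast; ring
    have htZ : 1 ≤ (t : ℤ) := by exact_mod_cast ht1
    refine build hNq h8 (2 * t + 2) ⟨t + 1, by ring⟩ ?_ ?_ ?_
    · exact unit_of_cert (-(4 * t + 3)) (2 * t + 2) (by rw [hNZ]; ring)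
    · exact intCast_ne_zero_of_bound (by omega) (by rw [hNZ, abs_sub_comm, abs_of_nonneg (by omega)]; omega)
    · exact intCast_ne_zero_of_bound (by omega) (by rw [hNZ, abs_of_nonneg (by omega)]; omega)
  · -- q = 4t+3, t ≥ 1
    obtain ⟨t, ht⟩ : ∃ t : ℕ, q = 4 * t + 3 := ⟨q / 4, by omega⟩
    have ht1 : 1 ≤ t := by omega
    have hNZ : (N : ℤ) = 8 * (t : ℤ) + 6 := by rw [hNq, ht]; push_cast; ring
    have htZ : 1 ≤ (t : ℤ) := by exact_mod_cast ht1
    refine build hNq h8 (-(2 * t)) ⟨-t, by ring⟩ ?_ ?_ ?_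
    · exact unit_of_cert (2 * t + 1) t (by rw [hNZ]; ring)
    · exact intCast_ne_zero_of_bound (by omega) (by rw [hNZ, abs_of_nonneg (by omega)]; omega)
    · refine intCast_ne_zero_of_bound (by omega) ?_
      rw [hNZ]
      have : (2 * -(2 * (t : ℤ))) = -(4 * t) := by ring
      rw [this, abs_neg, abs_of_nonneg (by omega)]
      omega

end Aux

/-- For every even `n ≥ 8` there is a nut graph of order `n`
with exactly one vertex orbit and exactly two edge orbits. -/
theorem exists_nut_one_vertexOrbit_two_edgeOrbits (n : ℕ)
    (hn : Even n) (hn8 : 8 ≤ n) :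
    ∃ G : SimpleGraph (Fin n), IsNutGraph G ∧
      numVertexOrbits G = 1 ∧ numEdgeOrbits G = 2 := by
  obtain ⟨q, hq⟩ : ∃ q, n = 2 * q := by
    obtain ⟨k, hk⟩ := hn; exact ⟨k, by omega⟩
  obtain ⟨m, rfl⟩ : ∃ m, n = m + 1 := ⟨n - 1, by omega⟩
  haveI : NeZero (m + 1) := ⟨Nat.succ_ne_zero m⟩
  exact zmod_main (m + 1) q hq hn8

end NutPaper
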